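/- Let S ⊆ {−,+}^n be a set of sign vectors containing the all-plus and all-minus vectors, and let V_S be the profile over alternatives {a_1, b_1, …, a_n, b_n} with one voter v_σ per σ ∈ S whose strict order satisfies {a_1,b_1} ≻ {a_2,b_2} ≻ ⋯ ≻ {a_n,b_n} and a_i ≻ b_i iff σ_i = +. If V_S is d-Euclidean, then S is d-realisable: there exist oriented hyperplanes h_1, …, h_n in ℝ^d such that every σ ∈ S is the sign vector of some point of ℝ^d (the point lying on the positive side of h_i iff σ_i = +). -/

import Mathlib

lemma aux_bisector {d : ℕ} (p a b : EuclideanSpace ℝ (Fin d)) :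
    ‖p - a‖ < ‖p - b‖ ↔ ‖a‖ ^ 2 - ‖b‖ ^ 2 < (inner ℝ ((2:ℝ) • (a - b)) p : ℝ) := by
  have h1 : ‖p - a‖ ^ 2 = ‖p‖ ^ 2 - 2 * inner ℝ p a + ‖a‖ ^ 2 := norm_sub_sq_real p a
  have h2 : ‖p - b‖ ^ 2 = ‖p‖ ^ 2 - 2 * inner ℝ p b + ‖b‖ ^ 2 := norm_sub_sq_real p b
  have hin : (inner ℝ ((2:ℝ) • (a - b)) p : ℝ) = 2 * inner ℝ a p - 2 * inner ℝ b p := by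
    simp [inner_smul_left, inner_sub_left]; ring
  have hca : (inner ℝ p a : ℝ) = inner ℝ a p := real_inner_comm a p
  have hcb : (inner ℝ p b : ℝ) = inner ℝ b p := real_inner_comm b p
  constructor
  · intro h
    nlinarith [norm_nonneg (p - a), norm_nonneg (p - b)]
  · intro h
    nlinarith [norm_nonneg (p - a), norm_nonneg (p - b)]

/-- If the profile V_S constructed from a sign-vector set S (containing the
all-plus and all-minus vectors; alternative a_i is (i, true), b_i is (i, false); voter σ
prefers (i,s) to (j,t) iff i < j, or i = j with s = σᵢ ≠ t) is d-Euclidean, then S is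
d-realisable by an arrangement of n oriented affine hyperplanes. -/
theorem stmt_8 (d n : ℕ) (S : Set (Fin n → Bool))
    (hplus : (fun _ => true) ∈ S) (hminus : (fun _ => false) ∈ S)
    (x : {σ // σ ∈ S} ⊕ (Fin n × Bool) → EuclideanSpace ℝ (Fin d))
    (hx : ∀ (σ : {σ // σ ∈ S}) (i j : Fin n) (s t : Bool),
      (i < j ∨ (i = j ∧ s = σ.1 i ∧ t ≠ σ.1 i)) →
      ‖x (Sum.inl σ) - x (Sum.inr (i, s))‖ < ‖x (Sum.inl σ) - x (Sum.inr (j, t))‖) :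
    ∃ (c : Fin n → EuclideanSpace ℝ (Fin d)) (β : Fin n → ℝ),
      (∀ i, c i ≠ 0) ∧
      ∀ σ ∈ S, ∃ p : EuclideanSpace ℝ (Fin d),
        ∀ i, if σ i then β i < (inner ℝ (c i) p : ℝ) else (inner ℝ (c i) p : ℝ) < β i := by
  refine ⟨fun i => (2:ℝ) • (x (Sum.inr (i, true)) - x (Sum.inr (i, false))),
    fun i => ‖x (Sum.inr (i, true))‖ ^ 2 - ‖x (Sum.inr (i, false))‖ ^ 2, ?_, ?_⟩
  · intro i hzero
    have hne : x (Sum.inr (i, true)) ≠ x (Sum.inr (i, false)) := by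
      intro he
      have := hx ⟨_, hplus⟩ i i true false (Or.inr ⟨rfl, rfl, by simp⟩)
      rw [he] at this
      exact lt_irrefl _ this
    apply hne
    have := smul_eq_zero.mp hzero
    rcases this with h | h
    · norm_num at h
    · exact sub_eq_zero.mp h
  · intro σ hσ
    refine ⟨x (Sum.inl ⟨σ, hσ⟩), fun i => ?_⟩
    cases hcase : σ i with
    | true =>
      simp only [if_true]
      exact (aux_bisector _ _ _).mp
        (hx ⟨σ, hσ⟩ i i true false (Or.inr ⟨rfl, by simp [hcase]⟩))
    | false =>
      rw [if_neg (by simp)]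
      beta_reduce
      have h := hx ⟨σ, hσ⟩ i i false true (Or.inr ⟨rfl, by simp [hcase]⟩)
      have h2 := (aux_bisector (x (Sum.inl ⟨σ, hσ⟩)) (x (Sum.inr (i, false)))
        (x (Sum.inr (i, true)))).mp h
      have hswap : ((2:ℝ) • (x (Sum.inr (i, false)) - x (Sum.inr (i, true)))) =
          -((2:ℝ) • (x (Sum.inr (i, true)) - x (Sum.inr (i, false)))) := by
        rw [← smul_neg, neg_sub]
      rw [hswap, inner_neg_left] at h2
      linarith
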